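/- Let A ∈ Σ⁽²⁾ₙ be an array all of whose nonzero entries equal 1/2, with exactly two 1/2-entries in each coordinate hyperplane. Define the graph Ḡ(A) on supp(A) joining two support elements iff they agree in at least one coordinate position's value (lie in a common coordinate hyperplane). If Ḡ(A) is connected and contains an odd cycle, then A is a vertex of Σ⁽²⁾ₙ. -/

import Mathlib

def IsVertex {V : Type*} [AddCommGroup V] [Module ℝ V] (P : Set V) (A : V) : Prop :=
  A ∈ P ∧ ∀ B ∈ P, ∀ C ∈ P, A = (1 / 2 : ℝ) • (B + C) → B = C

/-- `Σ⁽²⁾ₙ`: nonnegative `n × n × n` arrays in which every coordinate hyperplane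
sums to 1. -/
def Sigma2 (n : ℕ) : Set (Fin n → Fin n → Fin n → ℝ) :=
  {A | (∀ i j k, 0 ≤ A i j k) ∧
    (∀ i, ∑ j, ∑ k, A i j k = 1) ∧
    (∀ j, ∑ i, ∑ k, A i j k = 1) ∧
    (∀ k, ∑ i, ∑ j, A i j k = 1)}

/-- The graph `Ḡ(A)` on the support of `A`, joining two support elements iff they lie
in a common coordinate hyperplane (agree in at least one coordinate). -/
def hypGraph {n : ℕ} (A : Fin n → Fin n → Fin n → ℝ) :
    SimpleGraph {x : Fin n × Fin n × Fin n // A x.1 x.2.1 x.2.2 ≠ 0} where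
  Adj x y := x ≠ y ∧ (x.1.1 = y.1.1 ∨ x.1.2.1 = y.1.2.1 ∨ x.1.2.2 = y.1.2.2)
  symm := by
    constructor
    rintro x y ⟨hxy, h⟩
    refine ⟨hxy.symm, ?_⟩
    rcases h with h | h | h
    · exact Or.inl h.symm
    · exact Or.inr (Or.inl h.symm)
    · exact Or.inr (Or.inr h.symm)
  loopless := by constructor; rintro x ⟨hx, -⟩; exact hx rfl

private lemma pair_sum_one {n : ℕ} (g : Fin n × Fin n → ℝ)
    (s : Finset (Fin n × Fin n)) (hcard : s.card = 2)
    (hg : ∀ p ∉ s, g p = 0) (htot : ∑ p, g p = 1)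
    {x y : Fin n × Fin n} (hx : x ∈ s) (hy : y ∈ s) (hxy : x ≠ y) :
    g x + g y = 1 := by
  have hsub : ({x, y} : Finset (Fin n × Fin n)) = s := by
    apply Finset.eq_of_subset_of_card_le
    · intro p hp
      rcases Finset.mem_insert.mp hp with h | h
      · exact h ▸ hx
      · exact (Finset.mem_singleton.mp h) ▸ hy
    · rw [hcard, Finset.card_pair hxy]
  have h1 : ∑ p ∈ s, g p = 1 := by
    rw [← htot]
    exact Finset.sum_subset (Finset.subset_univ s) (fun p _ hp => hg p hp)
  rw [← hsub, Finset.sum_pair hxy] at h1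
  exact h1

/-- If `A ∈ Σ⁽²⁾ₙ` has all nonzero entries equal to `1/2`, exactly two `1/2`-entries in
each coordinate hyperplane, and `Ḡ(A)` is connected and non-bipartite (contains an odd
cycle), then `A` is a vertex of `Σ⁽²⁾ₙ`. -/
theorem stmt17 {n : ℕ} (A : Fin n → Fin n → Fin n → ℝ) (hA : A ∈ Sigma2 n)
    (hhalf : ∀ i j k, A i j k ≠ 0 → A i j k = 1 / 2)
    (htwo1 : ∀ i, (Finset.univ.filter fun p : Fin n × Fin n => A i p.1 p.2 ≠ 0).card = 2)
    (htwo2 : ∀ j, (Finset.univ.filter fun p : Fin n × Fin n => A p.1 j p.2 ≠ 0).card = 2)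
    (htwo3 : ∀ k, (Finset.univ.filter fun p : Fin n × Fin n => A p.1 p.2 k ≠ 0).card = 2)
    (hconn : (hypGraph A).Connected) (hodd : ¬ (hypGraph A).Colorable 2) :
    IsVertex (Sigma2 n) A := by
  refine ⟨hA, ?_⟩
  intro B hB C hC hABC
  obtain ⟨hBpos, hB1, hB2, hB3⟩ := hB
  obtain ⟨hCpos, hC1, hC2, hC3⟩ := hC
  have hpt : ∀ i j k, B i j k + C i j k = 2 * A i j k := by
    intro i j k
    have h := congrFun (congrFun (congrFun hABC i) j) k
    simp only [Pi.smul_apply, Pi.add_apply, smul_eq_mul] at h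
    linarith
  have hz : ∀ i j k, A i j k = 0 → B i j k = 0 ∧ C i j k = 0 := by
    intro i j k h
    have h1 := hpt i j k
    have h2 := hBpos i j k; have h3 := hCpos i j k
    constructor <;> nlinarith
  set f : {x : Fin n × Fin n × Fin n // A x.1 x.2.1 x.2.2 ≠ 0} → ℝ :=
    fun x => B x.1.1 x.1.2.1 x.1.2.2 - C x.1.1 x.1.2.1 x.1.2.2 with hf
  have hedge : ∀ x y, (hypGraph A).Adj x y → f y = - f x := by
    rintro ⟨⟨xi, xj, xk⟩, hx⟩ ⟨⟨yi, yj, yk⟩, hy⟩ ⟨hne, hcase⟩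
    have hne' : (xi, xj, xk) ≠ (yi, yj, yk) := fun h => hne (Subtype.ext h)
    simp only [hf]
    rcases hcase with h | h | h
    · -- shared first coordinate
      simp only at h
      subst h
      have hpne : (xj, xk) ≠ (yj, yk) := by
        intro h; apply hne'; rw [Prod.mk.injEq] at h; rw [h.1, h.2]
      have hxm : (xj, xk) ∈ Finset.univ.filter fun p : Fin n × Fin n => A xi p.1 p.2 ≠ 0 := by
        simp only [Finset.mem_filter, Finset.mem_univ, true_and]; exact hx
      have hym : (yj, yk) ∈ Finset.univ.filter fun p : Fin n × Fin n => A xi p.1 p.2 ≠ 0 := by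
        simp only [Finset.mem_filter, Finset.mem_univ, true_and]; exact hy
      have hBp := pair_sum_one (fun p => B xi p.1 p.2) _ (htwo1 xi)
        (fun p hp => by
          simp only [Finset.mem_filter, Finset.mem_univ, true_and, not_not] at hp
          exact (hz _ _ _ hp).1)
        (by rw [Fintype.sum_prod_type]; exact hB1 xi) hxm hym hpne
      have hCp := pair_sum_one (fun p => C xi p.1 p.2) _ (htwo1 xi)
        (fun p hp => by
          simp only [Finset.mem_filter, Finset.mem_univ, true_and, not_not] at hp
          exact (hz _ _ _ hp).2)
        (by rw [Fintype.sum_prod_type]; exact hC1 xi) hxm hym hpne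
      simp only at hBp hCp
      linarith
    · -- shared second coordinate
      simp only at h
      subst h
      have hpne : (xi, xk) ≠ (yi, yk) := by
        intro h; apply hne'; rw [Prod.mk.injEq] at h; rw [h.1, h.2]
      have hxm : (xi, xk) ∈ Finset.univ.filter fun p : Fin n × Fin n => A p.1 xj p.2 ≠ 0 := by
        simp only [Finset.mem_filter, Finset.mem_univ, true_and]; exact hx
      have hym : (yi, yk) ∈ Finset.univ.filter fun p : Fin n × Fin n => A p.1 xj p.2 ≠ 0 := by
        simp only [Finset.mem_filter, Finset.mem_univ, true_and]; exact hy
      have hBp := pair_sum_one (fun p => B p.1 xj p.2) _ (htwo2 xj)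
        (fun p hp => by
          simp only [Finset.mem_filter, Finset.mem_univ, true_and, not_not] at hp
          exact (hz _ _ _ hp).1)
        (by rw [Fintype.sum_prod_type]; exact hB2 xj) hxm hym hpne
      have hCp := pair_sum_one (fun p => C p.1 xj p.2) _ (htwo2 xj)
        (fun p hp => by
          simp only [Finset.mem_filter, Finset.mem_univ, true_and, not_not] at hp
          exact (hz _ _ _ hp).2)
        (by rw [Fintype.sum_prod_type]; exact hC2 xj) hxm hym hpne
      simp only at hBp hCp
      linarith
    · -- shared third coordinate
      simp only at h
      subst h
      have hpne : (xi, xj) ≠ (yi, yj) := by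
        intro h; apply hne'; rw [Prod.mk.injEq] at h; rw [h.1, h.2]
      have hxm : (xi, xj) ∈ Finset.univ.filter fun p : Fin n × Fin n => A p.1 p.2 xk ≠ 0 := by
        simp only [Finset.mem_filter, Finset.mem_univ, true_and]; exact hx
      have hym : (yi, yj) ∈ Finset.univ.filter fun p : Fin n × Fin n => A p.1 p.2 xk ≠ 0 := by
        simp only [Finset.mem_filter, Finset.mem_univ, true_and]; exact hy
      have hBp := pair_sum_one (fun p => B p.1 p.2 xk) _ (htwo3 xk)
        (fun p hp => by
          simp only [Finset.mem_filter, Finset.mem_univ, true_and, not_not] at hp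
          exact (hz _ _ _ hp).1)
        (by rw [Fintype.sum_prod_type]; exact hB3 xk) hxm hym hpne
      have hCp := pair_sum_one (fun p => C p.1 p.2 xk) _ (htwo3 xk)
        (fun p hp => by
          simp only [Finset.mem_filter, Finset.mem_univ, true_and, not_not] at hp
          exact (hz _ _ _ hp).2)
        (by rw [Fintype.sum_prod_type]; exact hC3 xk) hxm hym hpne
      simp only at hBp hCp
      linarith
  have habs : ∀ x y, (hypGraph A).Reachable x y → |f x| = |f y| := by
    intro x y hr
    obtain ⟨w⟩ := hr
    induction w with
    | nil => rfl
    | cons h p ih =>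
        rw [← ih]
        rw [hedge _ _ h, abs_neg]
  by_cases hex : ∃ x, f x = 0
  · obtain ⟨x0, hx0⟩ := hex
    have hfz : ∀ x, f x = 0 := by
      intro x
      have h := habs x0 x (hconn.preconnected x0 x)
      rw [hx0, abs_zero] at h
      exact abs_eq_zero.mp h.symm
    funext i j k
    by_cases hA0 : A i j k = 0
    · rw [(hz i j k hA0).1, (hz i j k hA0).2]
    · have h := hfz ⟨(i, j, k), hA0⟩
      simp only [hf] at h
      linarith
  · push_neg at hex
    exfalso
    apply hodd
    refine ⟨SimpleGraph.Coloring.mk (fun x => if 0 < f x then 0 else 1) ?_⟩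
    intro x y hadj
    have h1 := hedge x y hadj
    by_cases hx0 : 0 < f x
    · have hy0 : ¬ 0 < f y := by rw [h1]; linarith
      simp only [if_pos hx0, if_neg hy0]
      decide
    · have hxlt : f x < 0 := lt_of_le_of_ne (not_lt.mp hx0) (hex x)
      have hy0 : 0 < f y := by rw [h1]; linarith
      simp only [if_neg hx0, if_pos hy0]
      decide
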